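/- For M = 3 mints and W = 2 weighings, the scheme with rows (0,1,2) and (1,1,0) is valid, giving C(2,3) ≤ 4; moreover no valid 2×3 scheme has cost 3, so C(2,3) = 4. -/

import Mathlib

/-- Excess-weight vector of state `d` under scheme `C`. -/
def vvec {W M : ℕ} (C : Fin W → Fin M → ℕ) (d : Fin M → Bool) : Fin W → ℕ :=
  fun w => ∑ m, C w m * (if d m then 1 else 0)

/-- A scheme is valid when excess vectors of distinct states are never
positive rational multiples of each other. -/
def ValidScheme {W M : ℕ} (C : Fin W → Fin M → ℕ) : Prop :=
  ∀ d d' : Fin M → Bool, d ≠ d' →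
    ¬ ∃ q : ℚ, 0 < q ∧
      (fun w => (vvec C d' w : ℚ)) = q • (fun w => (vvec C d w : ℚ))

/-- Total number of coins needed: each mint supplies its column maximum. -/
def cost {W M : ℕ} (C : Fin W → Fin M → ℕ) : ℕ :=
  ∑ m, Finset.univ.sup fun w => C w m

private lemma boolkey : ∀ B : Fin 2 → Fin 3 → Bool,
    ∃ d d' : Fin 3 → Bool, d ≠ d' ∧
      vvec (fun w m => if B w m then 1 else 0) d
        = vvec (fun w m => if B w m then 1 else 0) d' := by decide

private lemma collide_not_valid {C : Fin 2 → Fin 3 → ℕ}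
    (h : ∃ d d' : Fin 3 → Bool, d ≠ d' ∧ vvec C d = vvec C d') :
    ¬ ValidScheme C := by
  obtain ⟨d, d', hne, heq⟩ := h
  intro hv
  exact hv d d' hne ⟨1, one_pos, by funext w; simp [heq]⟩

private lemma small_not_valid (C : Fin 2 → Fin 3 → ℕ)
    (hle : cost C ≤ 3) : ¬ ValidScheme C := by
  by_cases hz : ∃ m, ∀ w, C w m = 0
  · obtain ⟨m, hm⟩ := hz
    apply collide_not_valid
    refine ⟨fun i => decide (i = m), fun _ => false, ?_, ?_⟩
    · intro h
      have := congrFun h m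
      simp at this
    · funext w
      simp only [vvec]
      rw [Finset.sum_eq_zero, Finset.sum_eq_zero]
      · intro i _; simp
      · intro i _
        by_cases hi : i = m
        · subst hi; simp [hm]
        · simp [hi]
  · push_neg at hz
    have hone : ∀ w m, C w m ≤ 1 := by
      intro w m
      have hs : ∀ m', 1 ≤ Finset.univ.sup fun w => C w m' := by
        intro m'
        obtain ⟨w', hw'⟩ := hz m'
        calc 1 ≤ C w' m' := Nat.one_le_iff_ne_zero.mpr hw'
        _ ≤ _ := Finset.le_sup (f := fun w => C w m') (Finset.mem_univ w')
      have hcost : cost C = (Finset.univ.sup fun w => C w 0)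
          + (Finset.univ.sup fun w => C w 1) + (Finset.univ.sup fun w => C w 2) := by
        simp [cost, Fin.sum_univ_three]
      have h1 := hs 0; have h2 := hs 1; have h3 := hs 2
      have hsup : (Finset.univ.sup fun w => C w m) ≤ 1 := by
        match m with
        | 0 => omega
        | 1 => omega
        | 2 => omega
      exact le_trans (Finset.le_sup (f := fun w => C w m) (Finset.mem_univ w)) hsup
    apply collide_not_valid
    have hCeq : C = fun w m => if (decide (C w m = 1) : Bool) then 1 else 0 := by
      funext w m
      have := hone w m
      interval_cases h : C w m <;> simp
    rw [hCeq]
    exact boolkey _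

set_option maxRecDepth 8000 in
theorem stmt_14 :
    ValidScheme ![![0, 1, 2], ![1, 1, 0]] ∧ cost ![![0, 1, 2], ![1, 1, 0]] = 4 ∧
    (∀ C : Fin 2 → Fin 3 → ℕ, ValidScheme C → cost C ≠ 3) ∧
    (∀ C : Fin 2 → Fin 3 → ℕ, ValidScheme C → 4 ≤ cost C) := by
  refine ⟨?_, ?_, ?_, ?_⟩
  · intro d d' hne
    rintro ⟨q, hq, heq⟩
    obtain ⟨b0, b1, b2, rfl⟩ : ∃ b0 b1 b2, d = ![b0, b1, b2] :=
      ⟨d 0, d 1, d 2, by funext i; fin_cases i <;> rfl⟩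
    obtain ⟨c0, c1, c2, rfl⟩ : ∃ c0 c1 c2, d' = ![c0, c1, c2] :=
      ⟨d' 0, d' 1, d' 2, by funext i; fin_cases i <;> rfl⟩
    have h0 := congrFun heq 0
    have h1 := congrFun heq 1
    simp only [vvec, Fin.sum_univ_three, Pi.smul_apply, smul_eq_mul] at h0 h1
    cases b0 <;> cases b1 <;> cases b2 <;> cases c0 <;> cases c1 <;> cases c2 <;>
      first
      | exact hne rfl
      | (norm_num [Matrix.cons_val_zero, Matrix.cons_val_one, Matrix.head_cons,
          Matrix.cons_val_two, Matrix.tail_cons] at h0 h1 ⊢ <;> linarith)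
      | (norm_num [Matrix.cons_val_zero, Matrix.cons_val_one, Matrix.head_cons,
          Matrix.cons_val_two, Matrix.tail_cons] at h0 <;>
         norm_num [Matrix.cons_val_zero, Matrix.cons_val_one, Matrix.head_cons,
          Matrix.cons_val_two, Matrix.tail_cons] at h1 <;> linarith)
  · decide
  · intro C hv h
    exact small_not_valid C (le_of_eq h) hv
  · intro C hv
    by_contra h
    exact small_not_valid C (by omega) hv
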